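/- arXiv:2408.05686 — 2 statements merged into one kernel-verified Lean document; each statement's English description precedes it below -/
import Mathlib

section
/- For any policy π and two MDPs M_i and M_j sharing the same state space S, action space A, and discount factor γ ∈ [0,1), if the reward functions satisfy max_s |R_i(s) − R_j(s)| ≤ ε_R and the transition kernels satisfy max_{s,a} ‖P_i(s,a) − P_j(s,a)‖₁ ≤ ε_P, and rewards are bounded by R_max, then the value functions of π in the two MDPs satisfy ‖V_{M_i}^π − V_{M_j}^π‖_∞ ≤ ε_R/(1−γ) + γ ε_P R_max / (1−γ)². -/
open Finset

/-- Simulation lemma. For any policy `π` and two finite MDPs sharing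
state/action spaces and discount `γ ∈ [0,1)`, if rewards differ by at most `εR`
pointwise and transition kernels differ by at most `εP` in `L¹` distance, and
rewards are bounded by `Rmax`, then the value functions of `π` (characterized by
their Bellman equations) differ by at most `εR/(1-γ) + γ εP Rmax/(1-γ)²`. -/
theorem value_difference_bound
    {S A : Type*} [Fintype S] [Nonempty S]
    (Pi Pj : S → A → S → ℝ) (Ri Rj : S → ℝ) (γ : ℝ)
    (hγ0 : 0 ≤ γ) (hγ1 : γ < 1)
    (hPi : ∀ s a, (∀ s', 0 ≤ Pi s a s') ∧ ∑ s', Pi s a s' = 1)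
    (hPj : ∀ s a, (∀ s', 0 ≤ Pj s a s') ∧ ∑ s', Pj s a s' = 1)
    (Rmax : ℝ) (hRi : ∀ s, |Ri s| ≤ Rmax) (hRj : ∀ s, |Rj s| ≤ Rmax)
    (εR εP : ℝ)
    (hεR : ∀ s, |Ri s - Rj s| ≤ εR)
    (hεP : ∀ s a, ∑ s', |Pi s a s' - Pj s a s'| ≤ εP)
    (π : S → A) (Vi Vj : S → ℝ)
    (hVi : ∀ s, Vi s = Ri s + γ * ∑ s', Pi s (π s) s' * Vi s')
    (hVj : ∀ s, Vj s = Rj s + γ * ∑ s', Pj s (π s) s' * Vj s') :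
    ∀ s, |Vi s - Vj s| ≤ εR / (1 - γ) + γ * εP * Rmax / (1 - γ) ^ 2 := by
  have h1γ : (0:ℝ) < 1 - γ := by linarith
  obtain ⟨s₀, -, hs₀⟩ := Finset.exists_max_image Finset.univ (fun s => |Vj s|)
    ⟨Classical.arbitrary S, Finset.mem_univ _⟩
  set M := |Vj s₀| with hM
  have hM0 : 0 ≤ M := abs_nonneg _
  have hMle : ∀ s, |Vj s| ≤ M := fun s => hs₀ s (Finset.mem_univ s)
  have hεP0 : 0 ≤ εP :=
    le_trans (Finset.sum_nonneg fun _ _ => abs_nonneg _) (hεP s₀ (π s₀))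
  have hRmax0 : 0 ≤ Rmax := le_trans (abs_nonneg _) (hRi s₀)
  -- bound on M
  have hsum : |∑ s', Pj s₀ (π s₀) s' * Vj s'| ≤ M := by
    calc |∑ s', Pj s₀ (π s₀) s' * Vj s'| ≤ ∑ s', |Pj s₀ (π s₀) s' * Vj s'| :=
          Finset.abs_sum_le_sum_abs _ _
      _ ≤ ∑ s', Pj s₀ (π s₀) s' * M := Finset.sum_le_sum (fun s' _ => by
          rw [abs_mul, abs_of_nonneg ((hPj s₀ (π s₀)).1 s')]
          exact mul_le_mul_of_nonneg_left (hMle s') ((hPj s₀ (π s₀)).1 s'))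
      _ = M := by rw [← Finset.sum_mul, (hPj s₀ (π s₀)).2, one_mul]
  have hMb : M * (1 - γ) ≤ Rmax := by
    have hMle2 : M ≤ Rmax + γ * M := by
      calc M = |Rj s₀ + γ * ∑ s', Pj s₀ (π s₀) s' * Vj s'| := by rw [hM, ← hVj s₀]
        _ ≤ |Rj s₀| + |γ * ∑ s', Pj s₀ (π s₀) s' * Vj s'| := abs_add_le _ _
        _ ≤ Rmax + γ * M := by
            rw [abs_mul, abs_of_nonneg hγ0]
            exact add_le_add (hRj s₀) (mul_le_mul_of_nonneg_left hsum hγ0)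
    nlinarith
  -- bound on D
  obtain ⟨s₁, -, hs₁⟩ := Finset.exists_max_image Finset.univ (fun s => |Vi s - Vj s|)
    ⟨Classical.arbitrary S, Finset.mem_univ _⟩
  set D := |Vi s₁ - Vj s₁| with hD
  have hDle : ∀ s, |Vi s - Vj s| ≤ D := fun s => hs₁ s (Finset.mem_univ s)
  have key : Vi s₁ - Vj s₁ = (Ri s₁ - Rj s₁)
      + γ * (∑ s', Pi s₁ (π s₁) s' * (Vi s' - Vj s'))
      + γ * (∑ s', (Pi s₁ (π s₁) s' - Pj s₁ (π s₁) s') * Vj s') := by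
    rw [hVi s₁, hVj s₁]
    simp only [mul_sub, sub_mul, Finset.sum_sub_distrib]
    ring
  have hsum1 : |∑ s', Pi s₁ (π s₁) s' * (Vi s' - Vj s')| ≤ D := by
    calc |∑ s', Pi s₁ (π s₁) s' * (Vi s' - Vj s')|
        ≤ ∑ s', |Pi s₁ (π s₁) s' * (Vi s' - Vj s')| := Finset.abs_sum_le_sum_abs _ _
      _ ≤ ∑ s', Pi s₁ (π s₁) s' * D := Finset.sum_le_sum (fun s' _ => by
          rw [abs_mul, abs_of_nonneg ((hPi s₁ (π s₁)).1 s')]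
          exact mul_le_mul_of_nonneg_left (hDle s') ((hPi s₁ (π s₁)).1 s'))
      _ = D := by rw [← Finset.sum_mul, (hPi s₁ (π s₁)).2, one_mul]
  have hsum2 : |∑ s', (Pi s₁ (π s₁) s' - Pj s₁ (π s₁) s') * Vj s'| ≤ εP * M := by
    calc |∑ s', (Pi s₁ (π s₁) s' - Pj s₁ (π s₁) s') * Vj s'|
        ≤ ∑ s', |(Pi s₁ (π s₁) s' - Pj s₁ (π s₁) s') * Vj s'| :=
          Finset.abs_sum_le_sum_abs _ _
      _ ≤ ∑ s', |Pi s₁ (π s₁) s' - Pj s₁ (π s₁) s'| * M := Finset.sum_le_sum (fun s' _ => by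
          rw [abs_mul]
          exact mul_le_mul_of_nonneg_left (hMle s') (abs_nonneg _))
      _ = (∑ s', |Pi s₁ (π s₁) s' - Pj s₁ (π s₁) s'|) * M := by rw [Finset.sum_mul]
      _ ≤ εP * M := mul_le_mul_of_nonneg_right (hεP s₁ (π s₁)) hM0
  have hDb : D * (1 - γ) ≤ εR + γ * εP * M := by
    have : D ≤ εR + γ * D + γ * (εP * M) := by
      calc D = |(Ri s₁ - Rj s₁)
          + γ * (∑ s', Pi s₁ (π s₁) s' * (Vi s' - Vj s'))
          + γ * (∑ s', (Pi s₁ (π s₁) s' - Pj s₁ (π s₁) s') * Vj s')| := by rw [hD, key]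
        _ ≤ |Ri s₁ - Rj s₁| + |γ * (∑ s', Pi s₁ (π s₁) s' * (Vi s' - Vj s'))|
            + |γ * (∑ s', (Pi s₁ (π s₁) s' - Pj s₁ (π s₁) s') * Vj s')| :=
            (abs_add_le _ _).trans (add_le_add_left (abs_add_le _ _) _)
        _ ≤ εR + γ * D + γ * (εP * M) := by
            rw [abs_mul, abs_mul, abs_of_nonneg hγ0]
            exact add_le_add (add_le_add (hεR s₁)
              (mul_le_mul_of_nonneg_left hsum1 hγ0))
              (mul_le_mul_of_nonneg_left hsum2 hγ0)
    nlinarith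
  intro s
  have hrw : εR / (1 - γ) + γ * εP * Rmax / (1 - γ) ^ 2
      = (εR * (1 - γ) + γ * εP * Rmax) / (1 - γ) ^ 2 := by
    field_simp
  rw [hrw, le_div_iff₀ (by positivity)]
  nlinarith [hDle s, hDb, hMb, mul_nonneg (mul_nonneg hγ0 hεP0) hM0,
    mul_nonneg hγ0 hεP0, abs_nonneg (Vi s - Vj s)]
end

section
/- Let M_i and M_j be two discounted MDPs with the same state space, action space, and discount factor γ ∈ [0,1), with max_s |R_i(s) − R_j(s)| ≤ ε_R, max_{s,a} ‖P_i(s,a) − P_j(s,a)‖₁ ≤ ε_P, and rewards bounded by R_max. Let π*_{M_j} be an optimal policy for M_j. Then for every state s, V_{M_i}^*(s) − V_{M_i}^{π*_{M_j}}(s) ≤ 2[ε_R/(1−γ) + γ ε_P R_max/(1−γ)²], i.e., the optimal policy of M_j is 2(ε_R/(1−γ) + γε_P R_max/(1−γ)²)-suboptimal when executed in M_i. -/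
open Finset

lemma sum_mul_abs_le {S : Type*} [Fintype S] (p v : S → ℝ)
    (hp : ∀ s, 0 ≤ p s) (hsum : ∑ s, p s = 1) (M : ℝ) (hv : ∀ s, |v s| ≤ M) :
    |∑ s, p s * v s| ≤ M := by
  calc |∑ s, p s * v s| ≤ ∑ s, |p s * v s| := Finset.abs_sum_le_sum_abs _ _
    _ ≤ ∑ s, p s * M := by
        apply Finset.sum_le_sum
        intro s _
        rw [abs_mul, abs_of_nonneg (hp s)]
        exact mul_le_mul_of_nonneg_left (hv s) (hp s)
    _ = M := by rw [← Finset.sum_mul, hsum, one_mul]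

lemma sum_diff_mul_abs_le {S : Type*} [Fintype S] (p q w : S → ℝ)
    (εP M : ℝ) (hM : 0 ≤ M) (hpq : ∑ s, |p s - q s| ≤ εP) (hw : ∀ s, |w s| ≤ M) :
    |∑ s, (p s - q s) * w s| ≤ εP * M := by
  calc |∑ s, (p s - q s) * w s| ≤ ∑ s, |(p s - q s) * w s| := Finset.abs_sum_le_sum_abs _ _
    _ ≤ ∑ s, |p s - q s| * M := by
        apply Finset.sum_le_sum
        intro s _
        rw [abs_mul]
        exact mul_le_mul_of_nonneg_left (hw s) (abs_nonneg _)
    _ = (∑ s, |p s - q s|) * M := by rw [Finset.sum_mul]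
    _ ≤ εP * M := mul_le_mul_of_nonneg_right hpq hM

lemma pointwise_bound {S : Type*} [Fintype S] (p q v w : S → ℝ)
    (r r' γ εR εP D M : ℝ) (hγ : 0 ≤ γ)
    (hp : ∀ s, 0 ≤ p s) (hpsum : ∑ s, p s = 1)
    (hr : |r - r'| ≤ εR)
    (hvw : ∀ s, |v s - w s| ≤ D)
    (hw : ∀ s, |w s| ≤ M) (hM : 0 ≤ M)
    (hpq : ∑ s, |p s - q s| ≤ εP) :
    |(r + γ * ∑ s, p s * v s) - (r' + γ * ∑ s, q s * w s)| ≤ εR + γ * D + γ * εP * M := by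
  have key : (r + γ * ∑ s, p s * v s) - (r' + γ * ∑ s, q s * w s)
      = (r - r') + γ * ((∑ s, p s * (v s - w s)) + ∑ s, (p s - q s) * w s) := by
    rw [← Finset.sum_add_distrib]
    have : ∀ s, p s * (v s - w s) + (p s - q s) * w s = p s * v s - q s * w s := by
      intro s; ring
    simp_rw [this, Finset.sum_sub_distrib]
    ring
  rw [key]
  have h1 : |∑ s, p s * (v s - w s)| ≤ D := sum_mul_abs_le p _ hp hpsum D hvw
  have h2 : |∑ s, (p s - q s) * w s| ≤ εP * M := sum_diff_mul_abs_le p q w εP M hM hpq hw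
  calc |(r - r') + γ * ((∑ s, p s * (v s - w s)) + ∑ s, (p s - q s) * w s)|
      ≤ |r - r'| + |γ * ((∑ s, p s * (v s - w s)) + ∑ s, (p s - q s) * w s)| := abs_add_le _ _
    _ ≤ εR + γ * (D + εP * M) := by
        rw [abs_mul, abs_of_nonneg hγ]
        have := abs_add_le (∑ s, p s * (v s - w s)) (∑ s, (p s - q s) * w s)
        nlinarith [abs_nonneg ((∑ s, p s * (v s - w s)) + ∑ s, (p s - q s) * w s)]
    _ = εR + γ * D + γ * εP * M := by ring

/-- Policy transfer. If `πj` is an optimal policy for MDP `M_j`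
(it attains the Bellman-optimal value `Vjstar` of `M_j`), `Vistar` is the optimal
value function of `M_i`, and `Viπ` is the value of `πj` executed in `M_i`, then
`πj` is `2(εR/(1-γ) + γ εP Rmax/(1-γ)²)`-suboptimal in `M_i`. -/
theorem optimal_policy_transfer
    {S A : Type*} [Fintype S] [Fintype A] [Nonempty S] [Nonempty A]
    (Pi Pj : S → A → S → ℝ) (Ri Rj : S → ℝ) (γ : ℝ)
    (hγ0 : 0 ≤ γ) (hγ1 : γ < 1)
    (hPi : ∀ s a, (∀ s', 0 ≤ Pi s a s') ∧ ∑ s', Pi s a s' = 1)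
    (hPj : ∀ s a, (∀ s', 0 ≤ Pj s a s') ∧ ∑ s', Pj s a s' = 1)
    (Rmax : ℝ) (hRi : ∀ s, |Ri s| ≤ Rmax) (hRj : ∀ s, |Rj s| ≤ Rmax)
    (εR εP : ℝ)
    (hεR : ∀ s, |Ri s - Rj s| ≤ εR)
    (hεP : ∀ s a, ∑ s', |Pi s a s' - Pj s a s'| ≤ εP)
    -- optimal value function of M_i (Bellman optimality equation)
    (Vistar : S → ℝ)
    (hVistar : ∀ s, Vistar s = ⨆ a : A, (Ri s + γ * ∑ s', Pi s a s' * Vistar s'))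
    -- optimal value function of M_j and an optimal policy πj attaining it
    (Vjstar : S → ℝ)
    (hVjstar : ∀ s, Vjstar s = ⨆ a : A, (Rj s + γ * ∑ s', Pj s a s' * Vjstar s'))
    (πj : S → A)
    (hπj : ∀ s, Vjstar s = Rj s + γ * ∑ s', Pj s (πj s) s' * Vjstar s')
    -- value of πj when executed in M_i
    (Viπ : S → ℝ)
    (hViπ : ∀ s, Viπ s = Ri s + γ * ∑ s', Pi s (πj s) s' * Viπ s') :
    ∀ s, Vistar s - Viπ s ≤
      2 * (εR / (1 - γ) + γ * εP * Rmax / (1 - γ) ^ 2) := by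
  have h1γ : 0 < 1 - γ := by linarith
  obtain ⟨s₀⟩ := ‹Nonempty S›
  obtain ⟨a₀⟩ := ‹Nonempty A›
  have hRmax : 0 ≤ Rmax := le_trans (abs_nonneg _) (hRi s₀)
  have hεR0 : 0 ≤ εR := le_trans (abs_nonneg _) (hεR s₀)
  have hεP0 : 0 ≤ εP :=
    le_trans (Finset.sum_nonneg fun _ _ => abs_nonneg _) (hεP s₀ a₀)
  set Vmax := Rmax / (1 - γ) with hVmaxdef
  have hVmax0 : 0 ≤ Vmax := div_nonneg hRmax (le_of_lt h1γ)
  -- bound on |Vjstar|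
  obtain ⟨sm, hsm⟩ := Finite.exists_max (fun s => |Vjstar s|)
  have hMle : |Vjstar sm| ≤ Rmax + γ * |Vjstar sm| := by
    calc |Vjstar sm| = |Rj sm + γ * ∑ s', Pj sm (πj sm) s' * Vjstar s'| := by
          rw [← hπj sm]
      _ ≤ |Rj sm| + |γ * ∑ s', Pj sm (πj sm) s' * Vjstar s'| := abs_add_le _ _
      _ ≤ Rmax + γ * |Vjstar sm| := by
          rw [abs_mul, abs_of_nonneg hγ0]
          have := sum_mul_abs_le (Pj sm (πj sm)) Vjstar (hPj sm (πj sm)).1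
            (hPj sm (πj sm)).2 (|Vjstar sm|) hsm
          nlinarith [hRj sm]
  have hVjb : ∀ s, |Vjstar s| ≤ Vmax := by
    intro s
    have h1 : |Vjstar sm| ≤ Vmax := by
      rw [hVmaxdef, le_div_iff₀ h1γ]; nlinarith
    exact le_trans (hsm s) h1
  -- bound D1 = max |Vistar - Vjstar|
  obtain ⟨s1, hs1⟩ := Finite.exists_max (fun s => |Vistar s - Vjstar s|)
  set D1 := |Vistar s1 - Vjstar s1| with hD1def
  have hptw1 : ∀ s a,
      |(Ri s + γ * ∑ s', Pi s a s' * Vistar s') -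
        (Rj s + γ * ∑ s', Pj s a s' * Vjstar s')| ≤ εR + γ * D1 + γ * εP * Vmax := by
    intro s a
    exact pointwise_bound (Pi s a) (Pj s a) Vistar Vjstar (Ri s) (Rj s) γ εR εP D1 Vmax
      hγ0 (hPi s a).1 (hPi s a).2 (hεR s) (fun s' => hs1 s') hVjb hVmax0 (hεP s a)
  have hD1le : D1 ≤ εR + γ * D1 + γ * εP * Vmax := by
    rw [hD1def, abs_sub_le_iff]
    have bddI : BddAbove (Set.range fun a : A => Ri s1 + γ * ∑ s', Pi s1 a s' * Vistar s') :=
      (Set.finite_range _).bddAbove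
    have bddJ : BddAbove (Set.range fun a : A => Rj s1 + γ * ∑ s', Pj s1 a s' * Vjstar s') :=
      (Set.finite_range _).bddAbove
    constructor
    · obtain ⟨a1, ha1⟩ := Finite.exists_max (fun a : A => Ri s1 + γ * ∑ s', Pi s1 a s' * Vistar s')
      have h1 : Vistar s1 ≤ Ri s1 + γ * ∑ s', Pi s1 a1 s' * Vistar s' := by
        rw [hVistar s1]; exact ciSup_le ha1
      have h2 : Rj s1 + γ * ∑ s', Pj s1 a1 s' * Vjstar s' ≤ Vjstar s1 := by
        rw [hVjstar s1]; exact le_ciSup bddJ a1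
      have := abs_le.mp (hptw1 s1 a1)
      linarith [this.2]
    · obtain ⟨a2, ha2⟩ := Finite.exists_max (fun a : A => Rj s1 + γ * ∑ s', Pj s1 a s' * Vjstar s')
      have h1 : Vjstar s1 ≤ Rj s1 + γ * ∑ s', Pj s1 a2 s' * Vjstar s' := by
        rw [hVjstar s1]; exact ciSup_le ha2
      have h2 : Ri s1 + γ * ∑ s', Pi s1 a2 s' * Vistar s' ≤ Vistar s1 := by
        rw [hVistar s1]; exact le_ciSup bddI a2
      have := abs_le.mp (hptw1 s1 a2)
      linarith [this.1]
  -- bound D2 = max |Viπ - Vjstar|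
  obtain ⟨s2, hs2⟩ := Finite.exists_max (fun s => |Viπ s - Vjstar s|)
  set D2 := |Viπ s2 - Vjstar s2| with hD2def
  have hD2le : D2 ≤ εR + γ * D2 + γ * εP * Vmax := by
    have := pointwise_bound (Pi s2 (πj s2)) (Pj s2 (πj s2)) Viπ Vjstar (Ri s2) (Rj s2)
      γ εR εP D2 Vmax hγ0 (hPi s2 (πj s2)).1 (hPi s2 (πj s2)).2 (hεR s2)
      (fun s' => hs2 s') hVjb hVmax0 (hεP s2 (πj s2))
    calc D2 = |(Ri s2 + γ * ∑ s', Pi s2 (πj s2) s' * Viπ s') -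
        (Rj s2 + γ * ∑ s', Pj s2 (πj s2) s' * Vjstar s')| := by
          rw [hD2def, hViπ s2, hπj s2]
      _ ≤ εR + γ * D2 + γ * εP * Vmax := this
  -- conclude
  set Δ := εR / (1 - γ) + γ * εP * Rmax / (1 - γ) ^ 2 with hΔdef
  have hbound : ∀ D : ℝ, D ≤ εR + γ * D + γ * εP * Vmax → D ≤ Δ := by
    intro D hD
    rw [hΔdef, hVmaxdef] at *
    rw [div_add_div _ _ (ne_of_gt h1γ) (by positivity), le_div_iff₀ (by positivity)]
    have h : D * (1 - γ) ≤ εR + γ * εP * (Rmax / (1 - γ)) := by nlinarith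
    have h2 : γ * εP * (Rmax / (1 - γ)) * (1 - γ) = γ * εP * Rmax := by
      field_simp
    nlinarith [sq_nonneg (1 - γ)]
  have hD1 : D1 ≤ Δ := hbound D1 hD1le
  have hD2 : D2 ≤ Δ := hbound D2 hD2le
  intro s
  have h1 := abs_le.mp (le_trans (hs1 s) hD1)
  have h2 := abs_le.mp (le_trans (hs2 s) hD2)
  linarith [h1.2, h2.1]
end
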